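/- For q a complex number and n >= 1, the product over all compositions I = (i_1,...,i_r) of n of prod_{k=1}^r (1 - q^{i_k}) equals (prod_{i=1}^{n-1} (1-q^i)^{(n-i+3)*2^{n-i-2}}) * (1-q^n). -/

import Mathlib

open Finset

private def dd : ℕ → ℕ
  | 0 => 1
  | 1 => 2
  | (m+2) => 2 * dd (m+1) + 2^m

private lemma dd_eq (m : ℕ) : dd m = 2^(m-1) + ∑ k ∈ Finset.range m, dd k := by
  induction m using Nat.strong_induction_on with
  | _ m ih =>
    match m with
    | 0 => simp [dd]
    | 1 => simp [dd]
    | (m+2) =>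
      have h1 := ih (m+1) (by omega)
      rw [Finset.sum_range_succ]
      rw [show dd (m+2) = 2 * dd (m+1) + 2^m from rfl]
      have h2 : (2:ℕ)^(m+2-1) = 2 * 2^m := by
        rw [show m+2-1 = m+1 from rfl, pow_succ]; ring
      simp only [Nat.add_sub_cancel] at h1 ⊢
      omega

private lemma dd_mul (m : ℕ) (hm : 1 ≤ m) : 4 * dd m = (m+3) * 2^m := by
  induction m with
  | zero => omega
  | succ m ih =>
    match m with
    | 0 => simp [dd]
    | (k+1) =>
      have h := ih (by omega)
      calc 4 * dd (k+2) = 2*(4*dd (k+1)) + 2^(k+2) := by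
            rw [show dd (k+2) = 2*dd (k+1) + 2^k from rfl]; ring
        _ = 2*((k+1+3)*2^(k+1)) + 2^(k+2) := by rw [h]
        _ = (k+2+3) * 2^(k+2) := by ring

private lemma blocks_eq_nil (I : Composition 0) : I.blocks = [] := by
  have h := I.blocks_sum
  cases hb : I.blocks with
  | nil => rfl
  | cons a l =>
    have := I.blocks_pos (hb ▸ (List.mem_cons_self : a ∈ a :: l))
    rw [hb] at h
    simp only [List.sum_cons] at h
    omega

private lemma comp_heq {a b : ℕ} (h : a = b) {J : Composition a} {K : Composition b}
    (hb : J.blocks = K.blocks) : HEq J K := by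
  subst h; exact heq_of_eq (Composition.ext hb)

/-- Split a composition of `n > 0` into its first block (recorded via `n - first`)
and the rest. -/
private def splitEquiv (n : ℕ) (hn : 0 < n) : (Σ i : Fin n, Composition i) ≃ Composition n where
  toFun x := ⟨(n - x.1) :: x.2.blocks,
    by
      intro i hi
      rcases List.mem_cons.1 hi with h | h
      · subst h; have := x.1.2; omega
      · exact x.2.blocks_pos h,
    by
      simp only [List.sum_cons, x.2.blocks_sum]
      have := x.1.2; omega⟩
  invFun I := ⟨⟨n - I.blocks.headI, by
      have h := I.blocks_sum
      cases hb : I.blocks with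
      | nil => rw [hb] at h; simp at h; omega
      | cons a l =>
        have ha := I.blocks_pos (hb ▸ (List.mem_cons_self : a ∈ a :: l))
        rw [hb] at h; simp only [List.sum_cons] at h
        simp [hb, List.headI]; omega⟩,
    ⟨I.blocks.tail,
      fun hi => I.blocks_pos (List.mem_of_mem_tail hi),
      by
        show I.blocks.tail.sum = n - I.blocks.headI
        have h := I.blocks_sum
        cases hb : I.blocks with
        | nil => rw [hb] at h; simp at h; omega
        | cons a l =>
          rw [hb] at h; simp only [List.sum_cons] at h
          simp [hb, List.headI]; omega⟩⟩
  left_inv := by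
    rintro ⟨⟨i, hi⟩, J⟩
    have hs := J.blocks_sum
    apply Sigma.ext
    · simp [List.headI]; omega
    · exact comp_heq (by simp [List.headI]; omega) (by simp [List.headI])
  right_inv := by
    intro I
    apply Composition.ext
    have h := I.blocks_sum
    cases hb : I.blocks with
    | nil => rw [hb] at h; simp at h; omega
    | cons a l =>
      have ha := I.blocks_pos (hb ▸ (List.mem_cons_self : a ∈ a :: l))
      rw [hb] at h; simp only [List.sum_cons] at h
      simp [hb, List.headI]
      omega

private noncomputable def FF (q : ℂ) (n : ℕ) : ℂ :=
  ∏ I : Composition n, (I.blocks.map (fun p => 1 - q ^ p)).prod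

private lemma FF_rec (q : ℂ) {n : ℕ} (hn : 0 < n) :
    FF q n = ∏ i ∈ Finset.range n, ((1 - q^(n - i)) ^ (2^(i-1)) * FF q i) := by
  rw [FF, ← (splitEquiv n hn).prod_comp (fun I => (I.blocks.map (fun p => 1 - q ^ p)).prod)]
  rw [← Fin.prod_univ_eq_prod_range]
  rw [← Finset.univ_sigma_univ, Finset.prod_sigma]
  refine Fintype.prod_congr _ _ (fun i => ?_)
  have : ∀ J : Composition (i:ℕ),
      (((splitEquiv n hn) ⟨i, J⟩).blocks.map (fun p => 1 - q ^ p)).prod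
        = (1 - q^(n - (i:ℕ))) * (J.blocks.map (fun p => 1 - q ^ p)).prod := by
    intro J
    simp [splitEquiv]
  rw [Fintype.prod_congr _ _ this, Finset.prod_mul_distrib, Finset.prod_const, FF]
  congr 1
  rw [← Fintype.card, composition_card]

private lemma FF_eq (q : ℂ) (n : ℕ) :
    FF q n = ∏ j ∈ Finset.Icc 1 n, (1 - q^j) ^ dd (n - j) := by
  induction n using Nat.strong_induction_on with
  | _ n ih =>
    rcases Nat.eq_zero_or_pos n with h | h
    · subst h
      rw [Finset.Icc_eq_empty (by omega), Finset.prod_empty, FF]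
      refine Finset.prod_eq_one (fun I _ => by rw [blocks_eq_nil I]; simp)
    · rw [FF_rec q h]
      have step : ∀ i ∈ Finset.range n,
          (1 - q^(n-i))^(2^(i-1)) * FF q i
            = (1 - q^(n-i))^(2^(i-1)) * ∏ j ∈ Finset.Icc 1 n,
                (1-q^j) ^ (if j ≤ i then dd (i-j) else 0) := by
        intro i hi
        rw [ih i (Finset.mem_range.1 hi)]
        congr 1
        have e1 : ∏ j ∈ Finset.Icc 1 i, (1-q^j) ^ dd (i-j)
            = ∏ j ∈ Finset.Icc 1 i, (1-q^j) ^ (if j ≤ i then dd (i-j) else 0) :=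
          Finset.prod_congr rfl (fun j hj => by rw [if_pos (Finset.mem_Icc.1 hj).2])
        rw [e1]
        refine Finset.prod_subset
          (Finset.Icc_subset_Icc_right (by have := Finset.mem_range.1 hi; omega))
          (fun j hj hj2 => ?_)
        rw [if_neg (by
          simp only [Finset.mem_Icc] at hj hj2
          intro hle; exact hj2 ⟨hj.1, hle⟩), pow_zero]
      rw [Finset.prod_congr rfl step, Finset.prod_mul_distrib]
      have hA : ∏ i ∈ Finset.range n, (1 - q^(n-i))^(2^(i-1))
          = ∏ j ∈ Finset.Icc 1 n, (1 - q^j)^(2^((n-j)-1)) := by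
        refine Finset.prod_nbij' (fun i => n - i) (fun j => n - j) ?_ ?_ ?_ ?_ ?_
        · intro i hi; simp only [Finset.mem_range] at hi; simp only [Finset.mem_Icc]; omega
        · intro j hj; simp only [Finset.mem_Icc] at hj; simp only [Finset.mem_range]; omega
        · intro i hi; simp only [Finset.mem_range] at hi
          show n - (n - i) = i; omega
        · intro j hj; simp only [Finset.mem_Icc] at hj
          show n - (n - j) = j; omega
        · intro i hi; simp only [Finset.mem_range] at hi
          rw [show n - (n - i) = i by omega]
      rw [hA, Finset.prod_comm, ← Finset.prod_mul_distrib]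
      refine Finset.prod_congr rfl (fun j hj => ?_)
      simp only [Finset.mem_Icc] at hj
      rw [Finset.prod_pow_eq_pow_sum, ← pow_add]
      congr 1
      have hfilter : Finset.filter (fun i => j ≤ i) (Finset.range n) = Finset.Ico j n := by
        ext i; simp only [Finset.mem_filter, Finset.mem_range, Finset.mem_Ico]; omega
      rw [← Finset.sum_filter, hfilter, Finset.sum_Ico_eq_sum_range]
      have : ∀ k ∈ Finset.range (n - j), dd (j + k - j) = dd k := by
        intro k _; congr 1; omega
      rw [Finset.sum_congr rfl this, ← dd_eq]

theorem det_theta_q (q : ℂ) (n : ℕ) (hn : 1 ≤ n) :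
    (∏ I : Composition n, (I.blocks.map (fun p => 1 - q ^ p)).prod) =
      (∏ i ∈ Finset.Ico 1 n, (1 - q ^ i) ^ ((n - i + 3) * 2 ^ (n - i) / 4)) *
        (1 - q ^ n) := by
  have h := FF_eq q n
  rw [FF] at h
  rw [h]
  rw [show Finset.Icc 1 n = Finset.Ico 1 (n+1) by rw [Finset.Ico_add_one_right_eq_Icc]]
  rw [Finset.prod_Ico_succ_top hn]
  rw [show n - n = 0 by omega, show dd 0 = 1 from rfl, pow_one]
  congr 1
  refine Finset.prod_congr rfl (fun j hj => ?_)
  simp only [Finset.mem_Ico] at hj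
  congr 1
  have h4 := dd_mul (n - j) (by omega)
  omega
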